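/- Let G and G' be formula graphs such that G can be embedded into G' (there is a homomorphism (h, α) with h and each α_σ injective). Then there is an embedding (h', α') : G → G' such that each substitution α'_σ is bijective on the term set of sort σ and is the identity outside a finite set of variables. -/

import Mathlib

/-- A finite signature: finitely many sorts, first-order predicate symbols with
sorted finite arities, second-order relation symbols with finite arities, finitely
many constants per sort, countably infinitely many variables per sort, and no
function symbols. -/
structure Signature where
  Srt : Type
  Pred : Type
  Rel : Type
  sortFinite : Finite Srt
  predFinite : Finite Pred
  relFinite : Finite Rel
  parity : Pred → ℕ
  psort : (p : Pred) → Fin (parity p) → Srt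
  rarity : Rel → ℕ
  Const : Srt → Type
  constFinite : ∀ σ, Finite (Const σ)
  Var : Srt → Type
  varCountable : ∀ σ, Countable (Var σ)
  varInfinite : ∀ σ, Infinite (Var σ)

namespace Signature

/-- First-order terms of sort `σ`: constants and variables. -/
def Term (S : Signature) (σ : S.Srt) : Type := S.Const σ ⊕ S.Var σ

/-- A first-order literal: a predicate symbol, a polarity, and sorted arguments. -/
structure Literal (S : Signature) where
  pred : S.Pred
  pol : Bool
  args : (i : Fin (S.parity pred)) → S.Term (S.psort pred i)

/-- A formula graph: a finite set `V` of literals together with, for each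
second-order relation symbol `R`, a set of tuples from `V` of length the arity
of `R`. -/
structure FormulaGraph (S : Signature) where
  V : Set (Literal S)
  Vfin : V.Finite
  E : (R : S.Rel) → Set (Fin (S.rarity R) → Literal S)
  E_mem : ∀ R t, t ∈ E R → ∀ i, t i ∈ V

/-- The order of a formula graph: the number of its vertices. -/
noncomputable def FormulaGraph.order {S : Signature} (G : FormulaGraph S) : ℕ := G.V.ncard

/-- Applying a sort-indexed substitution to a literal. -/
def Literal.map {S : Signature} (α : ∀ σ, S.Term σ → S.Term σ) (l : Literal S) :
    Literal S :=
  ⟨l.pred, l.pol, fun i => α _ (l.args i)⟩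

/-- A homomorphism of formula graphs: a vertex map together with sort-indexed
substitutions fixing constants, compatible with the literal structure, and
preserving edges. -/
structure Hom {S : Signature} (G G' : FormulaGraph S) where
  h : Literal S → Literal S
  α : ∀ σ, S.Term σ → S.Term σ
  fixesConst : ∀ σ (c : S.Const σ), α σ (Sum.inl c) = Sum.inl c
  mapsV : ∀ l ∈ G.V, h l ∈ G'.V
  compat : ∀ l ∈ G.V, h l = Literal.map α l
  mapsE : ∀ R t, t ∈ G.E R → (fun i => h (t i)) ∈ G'.E R

/-- The identity homomorphism. -/
def Hom.id {S : Signature} (G : FormulaGraph S) : Hom G G where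
  h := fun l => l
  α := fun _ t => t
  fixesConst := fun _ _ => rfl
  mapsV := fun _ hl => hl
  compat := fun _ _ => rfl
  mapsE := fun _ _ ht => ht

/-- Composition of homomorphisms, componentwise. -/
def Hom.comp {S : Signature} {G G' G'' : FormulaGraph S}
    (f : Hom G G') (g : Hom G' G'') : Hom G G'' where
  h := fun l => g.h (f.h l)
  α := fun σ t => g.α σ (f.α σ t)
  fixesConst := by intro σ c; show g.α σ (f.α σ (Sum.inl c)) = Sum.inl c; rw [f.fixesConst, g.fixesConst]
  mapsV := fun l hl => g.mapsV _ (f.mapsV l hl)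
  compat := by
    intro l hl
    show g.h (f.h l) = Literal.map (fun σ t => g.α σ (f.α σ t)) l
    rw [g.compat _ (f.mapsV l hl), f.compat l hl]
    rfl
  mapsE := fun R t ht => g.mapsE R _ (f.mapsE R t ht)

/-- An embedding: a homomorphism injective on vertices with injective
substitutions. -/
def IsEmbedding {S : Signature} {G G' : FormulaGraph S} (f : Hom G G') : Prop :=
  Set.InjOn f.h G.V ∧ ∀ σ, Function.Injective (f.α σ)

/-- An isomorphism: a homomorphism with bijective components whose componentwise
inverses also form a homomorphism. -/
def IsIso {S : Signature} {G G' : FormulaGraph S} (f : Hom G G') : Prop :=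
  Set.BijOn f.h G.V G'.V ∧ (∀ σ, Function.Bijective (f.α σ)) ∧
  ∃ g : Hom G' G,
    (∀ l ∈ G.V, g.h (f.h l) = l) ∧ (∀ l ∈ G'.V, f.h (g.h l) = l) ∧
    (∀ σ t, g.α σ (f.α σ t) = t) ∧ (∀ σ t, f.α σ (g.α σ t) = t)

/-- Two formula graphs are isomorphic if there is an isomorphism between them. -/
def Iso {S : Signature} (G G' : FormulaGraph S) : Prop := ∃ f : Hom G G', IsIso f

/-- `G` can be embedded into `G'`. -/
def CanEmbed {S : Signature} (G G' : FormulaGraph S) : Prop :=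
  ∃ f : Hom G G', IsEmbedding f

end Signature

section Aux

open Equiv

lemma exists_perm_extend {V : Type*} (g : V → V) (hg : Function.Injective g)
    (A : Set V) (hA : A.Finite) :
    ∃ π : Equiv.Perm V, (∀ v ∈ A, π v = g v) ∧ {v | π v ≠ v}.Finite := by
  classical
  set s : Finset V := hA.toFinset with hs
  set t : Finset V := s.image g with ht
  set B : Finset V := s ∪ t with hB
  have hst : t.card = s.card := Finset.card_image_of_injective _ hg
  have hsB : s ⊆ B := Finset.subset_union_left
  have htB : t ⊆ B := Finset.subset_union_right
  have hcard : (B \ s).card = (B \ t).card := by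
    rw [Finset.card_sdiff_of_subset hsB, Finset.card_sdiff_of_subset htB, hst]
  let e : {x // x ∈ B \ s} ≃ {x // x ∈ B \ t} := Finset.equivOfCardEq hcard
  let F : {x // x ∈ B} → {x // x ∈ B} := fun x =>
    if hx : (x : V) ∈ s then ⟨g x, htB (Finset.mem_image_of_mem g hx)⟩
    else ⟨(e ⟨(x : V), Finset.mem_sdiff.mpr ⟨x.2, hx⟩⟩ : V),
      (Finset.mem_sdiff.mp (e ⟨(x : V), Finset.mem_sdiff.mpr ⟨x.2, hx⟩⟩).2).1⟩
  have hFinj : Function.Injective F := by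
    intro x y hxy
    by_cases hx : (x : V) ∈ s <;> by_cases hy : (y : V) ∈ s
    · simp only [F, dif_pos hx, dif_pos hy, Subtype.mk.injEq] at hxy
      exact Subtype.ext (hg hxy)
    · exfalso
      simp only [F, dif_pos hx, dif_neg hy, Subtype.mk.injEq] at hxy
      have h1 : g (x : V) ∈ t := Finset.mem_image_of_mem g hx
      have h2 := (Finset.mem_sdiff.mp (e ⟨(y : V), Finset.mem_sdiff.mpr ⟨y.2, hy⟩⟩).2).2
      rw [hxy] at h1; exact h2 h1
    · exfalso
      simp only [F, dif_neg hx, dif_pos hy, Subtype.mk.injEq] at hxy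
      have h1 : g (y : V) ∈ t := Finset.mem_image_of_mem g hy
      have h2 := (Finset.mem_sdiff.mp (e ⟨(x : V), Finset.mem_sdiff.mpr ⟨x.2, hx⟩⟩).2).2
      rw [← hxy] at h1; exact h2 h1
    · simp only [F, dif_neg hx, dif_neg hy, Subtype.mk.injEq] at hxy
      have h3 := e.injective (Subtype.ext hxy)
      exact Subtype.ext (congrArg (fun z : {x // x ∈ B \ s} => (z : V)) h3)
  have hFbij : Function.Bijective F := Finite.injective_iff_bijective.mp hFinj
  let perm : Equiv.Perm {x // x ∈ B} := Equiv.ofBijective F hFbij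
  let π : Equiv.Perm V := perm.extendDomain (Equiv.refl {x // x ∈ B})
  refine ⟨π, ?_, ?_⟩
  · intro v hv
    have hvs : v ∈ s := hA.mem_toFinset.mpr hv
    have hvB : v ∈ B := hsB hvs
    have := Equiv.Perm.extendDomain_apply_subtype perm (Equiv.refl {x // x ∈ B}) hvB
    rw [this]
    simp only [Equiv.refl_symm, Equiv.refl_apply]
    show ((perm ⟨v, hvB⟩ : {x // x ∈ B}) : V) = g v
    show ((F ⟨v, hvB⟩ : {x // x ∈ B}) : V) = g v
    simp only [F, dif_pos hvs]
  · apply Set.Finite.subset B.finite_toSet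
    intro v hv
    by_contra hvB
    exact hv (Equiv.Perm.extendDomain_apply_not_subtype perm (Equiv.refl {x // x ∈ B}) hvB)

end Aux

open Signature in
/-- if `G` embeds into `G'` then there is an embedding whose
substitutions are bijective and are the identity outside a finite set of
variables. -/
theorem stmt7 (S : Signature) (G G' : FormulaGraph S) (h : CanEmbed G G') :
    ∃ f : Hom G G', IsEmbedding f ∧ (∀ σ, Function.Bijective (f.α σ)) ∧
      ∀ σ, ∃ W : Set (S.Var σ), W.Finite ∧
        ∀ v ∉ W, f.α σ (Sum.inr v) = Sum.inr v := by
  classical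
  obtain ⟨f, hInjV, hInjα⟩ := h
  -- the injective substitutions map variables to variables
  have hvar : ∀ σ (v : S.Var σ), ∃ w, f.α σ (Sum.inr v) = Sum.inr w := by
    intro σ v
    cases hc : f.α σ (Sum.inr v) with
    | inl c =>
      exfalso
      have h1 : f.α σ (Sum.inr v) = f.α σ (Sum.inl c) := by
        rw [hc, f.fixesConst]
      have h2 := hInjα σ h1
      simp at h2
    | inr w => exact ⟨w, rfl⟩
  choose g hg using hvar
  have hginj : ∀ σ, Function.Injective (g σ) := by
    intro σ v1 v2 hv
    have h1 : f.α σ (Sum.inr v1) = f.α σ (Sum.inr v2) := by rw [hg, hg, hv]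
    have h2 := hInjα σ h1
    exact Sum.inr_injective h2
  -- variables of sort σ occurring in G
  set A : ∀ σ, Set (S.Var σ) := fun σ =>
    ⋃ l ∈ G.V, ⋃ i : Fin (S.parity l.pred),
      {v | ∃ h : S.psort l.pred i = σ, h ▸ l.args i = Sum.inr v} with hA
  have hAfin : ∀ σ, (A σ).Finite := by
    intro σ
    apply Set.Finite.biUnion G.Vfin
    intro l _
    apply Set.finite_iUnion
    intro i
    apply Set.Subsingleton.finite
    rintro v1 ⟨h1, e1⟩ v2 ⟨h2, e2⟩
    subst h1
    have e1' : l.args i = Sum.inr v1 := e1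
    have e2' : l.args i = Sum.inr v2 := e2
    have := e1'.symm.trans e2'
    exact Sum.inr_injective this
  have hmem : ∀ l ∈ G.V, ∀ i (v : S.Var (S.psort l.pred i)),
      l.args i = Sum.inr v → v ∈ A (S.psort l.pred i) := by
    intro l hl i v hv
    exact Set.mem_biUnion hl (Set.mem_iUnion.mpr ⟨i, ⟨rfl, hv⟩⟩)
  have hperm : ∀ σ, ∃ π : Equiv.Perm (S.Var σ),
      (∀ v ∈ A σ, π v = g σ v) ∧ {v | π v ≠ v}.Finite :=
    fun σ => exists_perm_extend (g σ) (hginj σ) (A σ) (hAfin σ)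
  choose π hπA hπfin using hperm
  set α' : ∀ σ, S.Term σ → S.Term σ := fun σ => Sum.map id (π σ) with hα'
  have hagree : ∀ l ∈ G.V, ∀ i, α' _ (l.args i) = f.α _ (l.args i) := by
    intro l hl i
    cases ht : l.args i with
    | inl c =>
      show Sum.inl c = f.α _ (Sum.inl c)
      rw [f.fixesConst]
    | inr v =>
      have hvA := hmem l hl i v ht
      show Sum.inr (π _ v) = f.α _ (Sum.inr v)
      rw [hπA _ v hvA, hg]
  have hmapeq : ∀ l ∈ G.V, Literal.map α' l = f.h l := by
    intro l hl
    have hfe : (fun i => α' _ (l.args i)) = (fun i => f.α _ (l.args i)) :=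
      funext (hagree l hl)
    rw [f.compat l hl]
    unfold Literal.map
    rw [hfe]
  have hbij : ∀ σ, Function.Bijective (α' σ) := by
    intro σ
    have he : α' σ = ⇑(Equiv.sumCongr (Equiv.refl (S.Const σ)) (π σ)) := by
      funext t; cases t <;> rfl
    rw [he]
    exact (Equiv.sumCongr (Equiv.refl (S.Const σ)) (π σ)).bijective
  have hmapsE : ∀ R t, t ∈ G.E R → (fun i => Literal.map α' (t i)) ∈ G'.E R := by
    intro R t ht
    have hE := f.mapsE R t ht
    have he : (fun i => Literal.map α' (t i)) = (fun i => f.h (t i)) :=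
      funext fun i => hmapeq (t i) (G.E_mem R t ht i)
    rw [he]; exact hE
  refine ⟨⟨fun l => Literal.map α' l, α', fun σ c => rfl,
    fun l hl => by show Literal.map α' l ∈ G'.V; rw [hmapeq l hl]; exact f.mapsV l hl,
    fun l _ => rfl, hmapsE⟩, ?_, ?_, ?_⟩
  · constructor
    · intro l1 h1 l2 h2 he
      simp only at he
      rw [hmapeq l1 h1, hmapeq l2 h2] at he
      exact hInjV h1 h2 he
    · intro σ
      exact (hbij σ).injective
  · exact hbij
  · intro σ
    refine ⟨{v | π σ v ≠ v}, hπfin σ, ?_⟩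
    intro v hv
    have : π σ v = v := not_not.mp hv
    show Sum.inr (π σ v) = Sum.inr v
    rw [this]
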